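/- Let f : [0,l] → ℝ be continuous with f(0) = f(l) = 0, and suppose that for every t ∈ (0,l), f''(t) ≥ 0 in the support sense, i.e., there exists A ∈ ℝ such that f(t+τ) ≥ f(t) + Aτ + o(τ²) as τ → 0. Then f(t) ≤ 0 for all t ∈ [0,l]. -/

import Mathlib

open Filter Set

/-- `f''(t) ≥ 0` in the support sense: there is `A ∈ ℝ` with
`f(t+τ) ≥ f(t) + Aτ + o(τ²)` as `τ → 0`. -/
def SuppSecondGEZero (f : ℝ → ℝ) (t : ℝ) : Prop :=
  ∃ A : ℝ, ∀ ε > (0 : ℝ), ∀ᶠ τ in nhds (0 : ℝ),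
    f t + A * τ - ε * τ ^ 2 ≤ f (t + τ)

theorem nonpos_of_suppSecondGE_zero (l : ℝ) (hl : 0 < l) (f : ℝ → ℝ)
    (hf : ContinuousOn f (Set.Icc 0 l)) (h0 : f 0 = 0) (hl0 : f l = 0)
    (hsupp : ∀ t ∈ Set.Ioo 0 l, SuppSecondGEZero f t) :
    ∀ t ∈ Set.Icc 0 l, f t ≤ 0 := by
  have key : ∀ t₀ ∈ Set.Icc 0 l, ∀ σ : ℝ, 0 < σ → f t₀ ≤ σ * l ^ 2 := by
    intro t₀ ht₀ σ hσ
    set g : ℝ → ℝ := fun t => f t + σ * (t - t₀) ^ 2 with hg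
    have hgc : ContinuousOn g (Set.Icc 0 l) :=
      hf.add (Continuous.continuousOn (by continuity))
    obtain ⟨s, hs, hmax⟩ := isCompact_Icc.exists_isMaxOn (Set.nonempty_Icc.2 hl.le) hgc
    by_cases hsint : s ∈ Set.Ioo 0 l
    · exfalso
      obtain ⟨A, hA⟩ := hsupp s hsint
      have h2 := hA (σ / 2) (by positivity)
      have h1 : ∀ᶠ τ in nhds (0 : ℝ), s + τ ∈ Set.Icc 0 l := by
        have ht : Filter.Tendsto (fun τ : ℝ => s + τ) (nhds 0) (nhds s) := by
          have := (continuous_add_left s).tendsto (0 : ℝ); rwa [add_zero] at this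
        exact (ht.eventually (isOpen_Ioo.eventually_mem hsint)).mono
          (fun τ h => Set.Ioo_subset_Icc_self h)
      obtain ⟨r, hr, hP⟩ := Metric.eventually_nhds_iff.1 (h1.and h2)
      set δ := r / 2 with hδ
      have hδpos : 0 < δ := by positivity
      have hd1 := hP (y := δ)
        (by rw [Real.dist_eq, sub_zero, abs_of_pos hδpos]; rw [hδ]; linarith)
      have hd2 := hP (y := -δ)
        (by rw [Real.dist_eq, sub_zero, abs_neg, abs_of_pos hδpos]; rw [hδ]; linarith)
      have hm1 : g (s + δ) ≤ g s := hmax hd1.1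
      have hm2 : g (s + -δ) ≤ g s := hmax hd2.1
      have hi1 := hd1.2
      have hi2 := hd2.2
      simp only [hg] at hm1 hm2
      nlinarith [hi1, hi2, hm1, hm2, hσ, hδpos, mul_pos hσ (mul_pos hδpos hδpos)]
    · have hsb : s = 0 ∨ s = l := by
        rcases hs with ⟨h0s, hsl⟩
        rcases eq_or_lt_of_le h0s with h | h
        · exact Or.inl h.symm
        · rcases eq_or_lt_of_le hsl with h' | h'
          · exact Or.inr h'
          · exact absurd ⟨h, h'⟩ hsint
      have hfs : f s = 0 := by rcases hsb with h | h <;> rw [h] <;> assumption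
      have hgt : g t₀ ≤ g s := hmax ht₀
      have hsq : (s - t₀) ^ 2 ≤ l ^ 2 := by
        rcases hs with ⟨h0s, hsl⟩; rcases ht₀ with ⟨h0t, htl⟩; nlinarith
      have : g t₀ = f t₀ := by simp [hg]
      have : f t₀ ≤ σ * (s - t₀) ^ 2 := by
        rw [← this]
        calc g t₀ ≤ g s := hgt
          _ = σ * (s - t₀) ^ 2 := by simp [hg, hfs]
      nlinarith [mul_le_mul_of_nonneg_left hsq hσ.le]
  intro t ht
  have h := le_of_forall_pos_le_add (a := f t) (b := 0) ?_
  · exact h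
  · intro ε hε
    have hσ : (0 : ℝ) < ε / l ^ 2 := by positivity
    have := key t ht (ε / l ^ 2) hσ
    rw [div_mul_cancel₀] at this
    · linarith
    · positivity
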